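/- arXiv:1511.03213 — 5 statements merged into one kernel-verified Lean document; each statement's English description precedes it below -/
import Mathlib

section
/- Let D₁ and D₂ be valid dependence relations on the same transition system such that: (H1) any two transitions executed on different threads that are D₁-independent are also D₂-independent; and (H2) for any two transition sequences from the same state that are Mazurkiewicz-equivalent w.r.t. D₁, every pair of D₂-dependent transitions occurring in them occurs in the same relative order in both. If P is a persistent set at a state s w.r.t. D₁, then P is a dependence-covering set at s w.r.t. D₂. -/
/-- An event-driven multi-threaded program, modeled abstractly as a
transition system. -/
structure Sys (S T R : Type) where
  thread : R → T
  next : S → T → Option R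
  enabled : R → S → Prop
  step : R → S → S
  next_thread : ∀ {s t r}, next s t = some r → thread r = t
  enabled_next : ∀ {r s}, enabled r s → next s (thread r) = some r

namespace Sys

variable {S T R : Type}

/-- `r` belongs to `nextTrans s`: it is the next transition of its thread at `s`. -/
def inNext (M : Sys S T R) (s : S) (r : R) : Prop :=
  M.next s (M.thread r) = some r

/-- `r` is blocked at `s`. -/
def blockedAt (M : Sys S T R) (s : S) (r : R) : Prop :=
  M.inNext s r ∧ ¬ M.enabled r s

/-- `Seq M s w s'`: `w` is a transition sequence from `s` ending at `s'`. -/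
inductive Seq (M : Sys S T R) : S → List R → S → Prop
  | nil (s : S) : Seq M s [] s
  | cons {s : S} {r : R} {w : List R} {s'' : S} :
      M.enabled r s → Seq M (M.step r s) w s'' → Seq M s (r :: w) s''

def Reachable (M : Sys S T R) (s s' : S) : Prop :=
  ∃ w, M.Seq s w s'

/-- Well-formedness of the system: no transition occurs twice in a transition
sequence, and a transition that has been executed never again belongs to
`nextTrans` at a later state of that sequence. -/
def Wf (M : Sys S T R) : Prop :=
  ∀ s w s', M.Seq s w s' → w.Nodup ∧ ∀ r ∈ w, ¬ M.inNext s' r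

/-- `D` is a valid dependence relation. -/
def ValidDep (M : Sys S T R) (D : R → R → Prop) : Prop :=
  (∀ r, D r r) ∧ (∀ a b, D a b → D b a) ∧
  ∀ r₁ r₂, ¬ D r₁ r₂ → ∀ s, M.enabled r₁ s →
    (M.inNext s r₂ ↔ M.inNext (M.step r₁ s) r₂) ∧
    (M.enabled r₂ s ↔ M.enabled r₂ (M.step r₁ s)) ∧
    (M.enabled r₂ s → M.step r₂ (M.step r₁ s) = M.step r₁ (M.step r₂ s))

/-- `u` (a transition sequence from `s` ending at `sm`) is a dependence-covering
sequence of `w` (a transition sequence from `s` ending at `sn`). -/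
def DepCovering (M : Sys S T R) (D : R → R → Prop)
    (s : S) (w : List R) (sn : S) (u : List R) (sm : S) : Prop :=
  M.Seq s w sn ∧ M.Seq s u sm ∧ (∀ r ∈ w, r ∈ u) ∧
  ∀ a b, D a b → List.Sublist [a, b] u →
    (List.Sublist [a, b] w) ∨
    (a ∈ w ∧ M.inNext sn b) ∨
    (a ∉ w ∧ M.inNext sn b ∧ ∃ ext s', M.Seq sn ext s' ∧ List.Sublist [a, b] ext) ∨
    (b ∉ w ∧ ¬ M.inNext sn b)

/-- `L` is a dependence-covering set at `s`. -/
def DepCovSet (M : Sys S T R) (D : R → R → Prop) (s : S) (L : Set R) : Prop :=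
  L.Nonempty ∧ (∀ r ∈ L, M.enabled r s) ∧
  ∀ w sn, M.Seq s w sn → w ≠ [] →
    ∃ r u' sm, r ∈ L ∧ M.DepCovering D s w sn (r :: u') sm

/-- `⟨DC, ρ⟩` is a deadlock cycle at state `s`. -/
def IsDeadlockCycle (M : Sys S T R) {n : ℕ} (DC : Set R) (ρ : ZMod n → R) (s : S) : Prop :=
  0 < n ∧ Function.Injective ρ ∧ Set.range ρ = DC ∧
  (∀ r ∈ DC, M.blockedAt s r) ∧
  ∀ (i : ZMod n) (s' : S), M.Reachable s s' → M.blockedAt s' (ρ i) →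
    ∀ r, M.enabled r s' → M.enabled (ρ i) (M.step r s') →
      M.thread r = M.thread (ρ (i + 1))

end Sys

namespace Sys

variable {S T R : Type}

/-- One swap of two adjacent independent transitions, both the original and the
swapped list being transition sequences from `s`. -/
inductive MazStep (M : Sys S T R) (D : R → R → Prop) (s : S) : List R → List R → Prop
  | mk {w₁ w₂ : List R} {a b : R} {sn sm : S} :
      ¬ D a b →
      M.Seq s (w₁ ++ a :: b :: w₂) sn →
      M.Seq s (w₁ ++ b :: a :: w₂) sm →
      MazStep M D s (w₁ ++ a :: b :: w₂) (w₁ ++ b :: a :: w₂)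

/-- Mazurkiewicz equivalence w.r.t. a dependence relation `D`: finitely many
swaps of adjacent `D`-independent transitions, each intermediate list again
being a transition sequence from `s`. -/
def MazEq (M : Sys S T R) (D : R → R → Prop) (s : S) : List R → List R → Prop :=
  Relation.ReflTransGen (MazStep M D s)

/-- `P` is a persistent set at `s` w.r.t. `D`. -/
def PersistentSet (M : Sys S T R) (D : R → R → Prop) (s : S) (P : Set R) : Prop :=
  P.Nonempty ∧ (∀ r ∈ P, M.enabled r s) ∧
  ∀ w sn, M.Seq s w sn → (∀ r ∈ w, r ∉ P) → ∀ r ∈ w, ∀ p ∈ P, ¬ D r p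

end Sys


section Aux

variable {S T R : Type}

private lemma aux_commute {M : Sys S T R} {D₁ : R → R → Prop} (h₁ : M.ValidDep D₁) {p : R} :
    ∀ (w : List R) {s sn : S}, M.Seq s w sn → M.enabled p s → (∀ r ∈ w, ¬ D₁ r p) →
      M.Seq (M.step p s) w (M.step p sn) ∧ M.enabled p sn := by
  intro w
  induction w with
  | nil =>
    intro s sn hseq hp _
    cases hseq
    exact ⟨Sys.Seq.nil _, hp⟩
  | cons r w ih =>
    intro s sn hseq hp hind
    obtain ⟨hrefl, hsym, hval⟩ := h₁
    cases hseq with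
    | cons hr ht =>
      have hrp : ¬ D₁ r p := hind r List.mem_cons_self
      have h3 := hval r p hrp s hr
      have hp' : M.enabled p (M.step r s) := h3.2.1.mp hp
      have hr' : M.enabled r (M.step p s) :=
        ((hval p r (fun h => hrp (hsym _ _ h)) s hp).2.1).mp hr
      have comm : M.step p (M.step r s) = M.step r (M.step p s) := h3.2.2 hp
      obtain ⟨hseq', hpen⟩ := ih ht hp' (fun x hx => hind x (List.mem_cons_of_mem _ hx))
      rw [comm] at hseq'
      exact ⟨Sys.Seq.cons hr' hseq', hpen⟩

private lemma seq_split {M : Sys S T R} :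
    ∀ (v : List R) {w : List R} {s sn : S}, M.Seq s (v ++ w) sn →
      ∃ s', M.Seq s v s' ∧ M.Seq s' w sn := by
  intro v
  induction v with
  | nil => intro w s sn hseq; exact ⟨s, Sys.Seq.nil _, hseq⟩
  | cons r v ih =>
    intro w s sn hseq
    cases hseq with
    | cons hr ht =>
      obtain ⟨s', h1, h2⟩ := ih ht
      exact ⟨s', Sys.Seq.cons hr h1, h2⟩

private lemma aux_prefix (P : Set R) :
    ∀ (w : List R), (¬ ∀ r ∈ w, r ∉ P) →
      ∃ v p w₂, w = v ++ p :: w₂ ∧ p ∈ P ∧ ∀ r ∈ v, r ∉ P := by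
  intro w
  induction w with
  | nil => intro h; exact absurd (by simp) h
  | cons a w ih =>
    intro h
    by_cases ha : a ∈ P
    · exact ⟨[], a, w, rfl, ha, by simp⟩
    · have h' : ¬ ∀ r ∈ w, r ∉ P := by
        intro hall
        exact h (by
          intro r hr
          rcases List.mem_cons.mp hr with rfl | hr
          · exact ha
          · exact hall r hr)
      obtain ⟨v, p, w₂, rfl, hp, hv⟩ := ih h'
      refine ⟨a :: v, p, w₂, rfl, hp, ?_⟩
      intro r hr
      rcases List.mem_cons.mp hr with rfl | hr
      · exact ha
      · exact hv r hr

private lemma mazstep_cons {M : Sys S T R} {D : R → R → Prop} {s : S} {r : R} {l l' : List R}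
    (hr : M.enabled r s) (h : Sys.MazStep M D (M.step r s) l l') :
    Sys.MazStep M D s (r :: l) (r :: l') := by
  cases h with
  | mk hD h1 h2 =>
    exact Sys.MazStep.mk (w₁ := r :: _) hD (Sys.Seq.cons hr h1) (Sys.Seq.cons hr h2)

private lemma mazeq_symm {M : Sys S T R} {D : R → R → Prop} {s : S}
    (hsym : ∀ a b, D a b → D b a) {x y : List R}
    (h : Sys.MazEq M D s x y) : Sys.MazEq M D s y x := by
  induction h with
  | refl => exact Relation.ReflTransGen.refl
  | tail _ hstep ih =>
    refine Relation.ReflTransGen.head ?_ ih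
    cases hstep with
    | mk hD h1 h2 => exact Sys.MazStep.mk (fun hd => hD (hsym _ _ hd)) h2 h1

private lemma aux_maz {M : Sys S T R} {D₁ : R → R → Prop} (h₁ : M.ValidDep D₁) {p : R} :
    ∀ (v : List R) {s : S} {w₂ : List R} {sn : S},
      M.Seq s (v ++ p :: w₂) sn → M.enabled p s → (∀ r ∈ v, ¬ D₁ r p) →
      ∃ sm, M.Seq s (p :: (v ++ w₂)) sm ∧
        Sys.MazEq M D₁ s (v ++ p :: w₂) (p :: (v ++ w₂)) := by
  intro v
  induction v with
  | nil =>
    intro s w₂ sn hseq hp _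
    exact ⟨sn, hseq, Relation.ReflTransGen.refl⟩
  | cons r v ih =>
    intro s w₂ sn hseq hp hind
    obtain ⟨hrefl, hsym, hval⟩ := h₁
    cases hseq with
    | cons hr ht =>
      have hrp : ¬ D₁ r p := hind r List.mem_cons_self
      have h3 := hval r p hrp s hr
      have hp' : M.enabled p (M.step r s) := h3.2.1.mp hp
      obtain ⟨sm, hsequ, hmaz⟩ := ih ht hp' (fun x hx => hind x (List.mem_cons_of_mem _ hx))
      have hmaz1 : Sys.MazEq M D₁ s (r :: (v ++ p :: w₂)) (r :: p :: (v ++ w₂)) :=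
        Relation.ReflTransGen.lift (fun l => r :: l) (fun _ _ h => mazstep_cons hr h) _ _ hmaz
      have hr' : M.enabled r (M.step p s) :=
        ((hval p r (fun h => hrp (hsym _ _ h)) s hp).2.1).mp hr
      have hseqrp : M.Seq s (r :: p :: (v ++ w₂)) sm := Sys.Seq.cons hr hsequ
      cases hsequ with
      | cons hp2 htail2 =>
        have comm : M.step p (M.step r s) = M.step r (M.step p s) := h3.2.2 hp
        rw [comm] at htail2
        have hseqpr : M.Seq s (p :: r :: (v ++ w₂)) sm :=
          Sys.Seq.cons hp (Sys.Seq.cons hr' htail2)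
        have hswap : Sys.MazStep M D₁ s (r :: p :: (v ++ w₂)) (p :: r :: (v ++ w₂)) :=
          Sys.MazStep.mk (w₁ := []) hrp hseqrp hseqpr
        exact ⟨sm, hseqpr, Relation.ReflTransGen.tail hmaz1 hswap⟩

end Aux

/-- A persistent set w.r.t. `D₁` is a dependence-covering set
w.r.t. `D₂`, under the hypotheses (H1) and (H2) relating `D₁` and `D₂`. -/
theorem persistentSet_is_dependence_covering_set
    {S T R : Type} (M : Sys S T R) (D₁ D₂ : R → R → Prop)
    (h₁ : M.ValidDep D₁) (h₂ : M.ValidDep D₂) (hwf : M.Wf)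
    (H1 : ∀ a b, M.thread a ≠ M.thread b → ¬ D₁ a b → ¬ D₂ a b)
    (H2 : ∀ s w v, Sys.MazEq M D₁ s w v →
      ∀ a b, D₂ a b → List.Sublist [a, b] w → List.Sublist [a, b] v)
    {s : S} {P : Set R} (hP : Sys.PersistentSet M D₁ s P) :
    M.DepCovSet D₂ s P := by
  obtain ⟨⟨p₀, hp₀⟩, hPen, hpers⟩ := hP
  have hsym₂ : ∀ a b, D₂ a b → D₂ b a := h₂.2.1
  have hsym₁ : ∀ a b, D₁ a b → D₁ b a := h₁.2.1
  refine ⟨⟨p₀, hp₀⟩, hPen, ?_⟩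
  intro w sn hseq hne
  by_cases hall : ∀ r ∈ w, r ∉ P
  · -- no transition of w belongs to P: take u = p₀ :: w
    have hind : ∀ r ∈ w, ¬ D₁ r p₀ := fun r hr => hpers w sn hseq hall r hr p₀ hp₀
    have hA := aux_commute h₁ w hseq (hPen p₀ hp₀) hind
    refine ⟨p₀, w, M.step p₀ sn, hp₀, hseq, Sys.Seq.cons (hPen p₀ hp₀) hA.1,
      fun r hr => List.mem_cons_of_mem _ hr, ?_⟩
    intro a b hD hsub
    cases hsub with
    | cons _ h => exact Or.inl h
    | cons_cons hh =>
      exfalso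
      rename_i h
      have hbw : b ∈ w := h.subset (List.mem_cons_self (a := b) (l := []))
      have hth : M.thread b = M.thread p₀ := by
        by_contra hne'
        exact H1 b p₀ hne' (hind b hbw) (hsym₂ _ _ hD)
      obtain ⟨w₁, w₂, rfl⟩ := List.append_of_mem hbw
      obtain ⟨s₁, hs1, hs2⟩ := seq_split w₁ hseq
      cases hs2 with
      | cons hb _ =>
        have hpen1 : M.enabled p₀ s₁ :=
          (aux_commute h₁ w₁ hs1 (hPen p₀ hp₀)
            (fun r hr => hind r (List.mem_append_left _ hr))).2
        have e1 := M.enabled_next hpen1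
        have e2 := M.enabled_next hb
        rw [hth] at e2
        have hab : p₀ = b := Option.some.inj (e1.symm.trans e2)
        exact hall b hbw (hab ▸ hp₀)
  · -- some transition of w belongs to P: take the first one
    obtain ⟨v, p, w₂, rfl, hpP, hvfree⟩ := aux_prefix P w hall
    obtain ⟨s₁, hs1, _⟩ := seq_split v hseq
    have hindv : ∀ r ∈ v, ¬ D₁ r p := fun r hr => hpers v s₁ hs1 hvfree r hr p hpP
    obtain ⟨sm, hsequ, hmaz⟩ := aux_maz h₁ v hseq (hPen p hpP) hindv
    have hmaz' := mazeq_symm hsym₁ hmaz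
    refine ⟨p, v ++ w₂, sm, hpP, hseq, hsequ, ?_, ?_⟩
    · intro r hr
      simp only [List.mem_append, List.mem_cons] at hr ⊢
      tauto
    · intro a b hD hsub
      exact Or.inl (H2 s _ _ hmaz' a b hD hsub)
end

section
/- Let D be a valid dependence relation, let w = r₁⋯r_n be a transition sequence from a state s with last state s_n, and let p be a transition enabled at s that is independent of r_i for every i. Then: (a) no r_i executes on the thread of p; (b) w is a transition sequence from step p s whose last state equals step p s_n; and (c) the list p, r₁, …, r_n is a transition sequence from s and is a dependence-covering sequence of w from s. -/
lemma indep_prepend_aux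
    {S T R : Type} (M : Sys S T R) (D : R → R → Prop)
    (hD : M.ValidDep D)
    {s sn : S} {w : List R} (hw : M.Seq s w sn) :
    ∀ {p : R}, M.enabled p s → (∀ r ∈ w, ¬ D p r) →
    M.enabled p sn ∧ (∀ r ∈ w, M.thread r ≠ M.thread p) ∧
    M.Seq (M.step p s) w (M.step p sn) := by
  obtain ⟨hrefl, hsymm, hvalid⟩ := hD
  induction hw with
  | nil s => exact fun hp _ => ⟨hp, by simp, Sys.Seq.nil _⟩
  | @cons s r w s'' hr hw' ih =>
    intro p hp hi
    have hpr : ¬ D p r := hi r (by simp)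
    have hrp : ¬ D r p := fun h => hpr (hsymm _ _ h)
    have hp' : M.enabled p (M.step r s) := (hvalid r p hrp s hr).2.1.mp hp
    obtain ⟨hEn, hTh, hSeq⟩ := ih hp' (fun a ha => hi a (by simp [ha]))
    refine ⟨hEn, ?_, ?_⟩
    · intro a ha
      rcases List.mem_cons.mp ha with rfl | ha
      · intro h
        have h1 := M.enabled_next hr
        have h2 := M.enabled_next hp
        rw [h] at h1
        rw [h1] at h2
        exact hpr (Option.some.inj h2 ▸ hrefl p)
      · exact hTh a ha
    · have hr' : M.enabled r (M.step p s) := (hvalid p r hpr s hp).2.1.mp hr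
      have hcomm : M.step r (M.step p s) = M.step p (M.step r s) :=
        (hvalid p r hpr s hp).2.2 hr
      exact Sys.Seq.cons hr' (hcomm ▸ hSeq)

/-- If `p` is enabled at `s` and independent of every
transition of a transition sequence `w` from `s`, then (a) no transition of `w`
executes on the thread of `p`, (b) `w` is a transition sequence from
`step p s` ending at `step p (last w)`, and (c) `p :: w` is a transition
sequence from `s` and a dependence-covering sequence of `w` from `s`. -/
theorem indep_transition_prepend
    {S T R : Type} (M : Sys S T R) (D : R → R → Prop)
    (hD : M.ValidDep D) (hwf : M.Wf)
    {s sn : S} {w : List R} (hw : M.Seq s w sn)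
    {p : R} (hp : M.enabled p s) (hindep : ∀ r ∈ w, ¬ D p r) :
    (∀ r ∈ w, M.thread r ≠ M.thread p) ∧
    M.Seq (M.step p s) w (M.step p sn) ∧
    M.Seq s (p :: w) (M.step p sn) ∧
    M.DepCovering D s w sn (p :: w) (M.step p sn) := by
  obtain ⟨_, hTh, hSeq⟩ := indep_prepend_aux M D hD hw hp hindep
  have hcons : M.Seq s (p :: w) (M.step p sn) := Sys.Seq.cons hp hSeq
  refine ⟨hTh, hSeq, hcons, hw, hcons, fun r hr => by simp [hr], ?_⟩
  intro a b hab hsub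
  cases hsub with
  | cons _ h => exact Or.inl h
  | cons_cons _ h =>
    exact absurd hab (hindep b (List.singleton_sublist.mp h))
end

section
/- Let D be a valid dependence relation and let w = r₁⋯r_n be a transition sequence from a state s. Suppose 1 ≤ k ≤ n and r_k is independent of r_i for every i < k. Then the list u = r_k, r₁, …, r_{k−1}, r_{k+1}, …, r_n is a transition sequence from s, last u = last w, and u is a dependence-covering sequence of w from s. -/
/-- If the `k`-th transition `rk` of a transition sequence
`w = w₁ ++ rk :: w₂` from `s` is independent of every earlier transition, then
`rk :: (w₁ ++ w₂)` is a transition sequence from `s` with the same last state,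
and it is a dependence-covering sequence of `w` from `s`. -/
theorem move_indep_transition_to_front
    {S T R : Type} (M : Sys S T R) (D : R → R → Prop)
    (hD : M.ValidDep D) (hwf : M.Wf)
    {s sn : S} {w₁ w₂ : List R} {rk : R}
    (hw : M.Seq s (w₁ ++ rk :: w₂) sn)
    (hind : ∀ r ∈ w₁, ¬ D rk r) :
    M.Seq s (rk :: (w₁ ++ w₂)) sn ∧
    M.DepCovering D s (w₁ ++ rk :: w₂) sn (rk :: (w₁ ++ w₂)) sn := by
  have main : ∀ (w₁ : List R) (s : S), (∀ r ∈ w₁, ¬ D rk r) →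
      M.Seq s (w₁ ++ rk :: w₂) sn → M.Seq s (rk :: (w₁ ++ w₂)) sn := by
    intro w₁
    induction w₁ with
    | nil => intro s _ h; simpa using h
    | cons r w₁' ih =>
      intro s hind h
      cases h with
      | cons hr hrest =>
        have h2 := ih (M.step r s) (fun x hx => hind x (List.mem_cons_of_mem _ hx)) hrest
        cases h2 with
        | cons hrk h3 =>
          obtain ⟨_, hsym, hvalid⟩ := hD
          have hnd : ¬ D r rk := fun h => hind r (List.mem_cons_self) (hsym _ _ h)
          obtain ⟨_, hiff, hcomm⟩ := hvalid r rk hnd s hr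
          have hrks : M.enabled rk s := hiff.mpr hrk
          obtain ⟨_, hiff2, _⟩ := hvalid rk r (hind r (List.mem_cons_self)) s hrks
          have hrrks : M.enabled r (M.step rk s) := hiff2.mp hr
          exact Sys.Seq.cons hrks (Sys.Seq.cons hrrks (by rw [← hcomm hrks]; exact h3))
  have hu := main w₁ s hind hw
  refine ⟨hu, hw, hu, ?_, ?_⟩
  · intro r hr
    simp only [List.mem_append, List.mem_cons] at hr ⊢
    tauto
  · intro a b hab hsub
    left
    cases hsub with
    | cons _ h =>
      -- [a,b] <+ w₁ ++ w₂
      exact h.trans (List.Sublist.append (List.Sublist.refl w₁) (List.sublist_cons_self rk w₂))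
    | cons_cons _ h =>
      -- a = rk, [b] <+ w₁ ++ w₂
      have hb : b ∈ w₁ ++ w₂ := List.singleton_sublist.mp h
      have hb2 : b ∈ w₂ := by
        rcases List.mem_append.mp hb with h1 | h2
        · exact absurd hab (hind b h1)
        · exact h2
      have : List.Sublist [rk, b] (rk :: w₂) :=
        List.Sublist.cons₂ rk (List.singleton_sublist.mpr hb2)
      exact this.trans (List.sublist_append_right w₁ (rk :: w₂))
end

section
/- Let D be a valid dependence relation, let α be an assertion over local variables with violation predicate Viol, and let w be a transition sequence from a state s whose last state s_n satisfies Viol s_n. Let u be a dependence-covering sequence of w from s such that every transition occurring in u but not in w is independent of α. Then some prefix of u reaches a state v' with Viol v'. -/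
namespace Sys

variable {S T R : Type}

/-- An assertion over local variables, modeled by a transition `α` together
with a violation predicate `Viol`. -/
def IsAssertion (M : Sys S T R) (D : R → R → Prop) (α : R) (Viol : S → Prop) : Prop :=
  (∀ s, Viol s → M.enabled α s) ∧
  ∀ r s, ¬ D r α → M.enabled r s → (Viol (M.step r s) ↔ Viol s)

end Sys

namespace Sys

variable {S T R : Type}

lemma seq_nil_eq {M : Sys S T R} {s m : S} (h : M.Seq s [] m) : m = s := by
  cases h; rfl

lemma seq_append {M : Sys S T R} {p q : List R} :
    ∀ {s v : S}, M.Seq s (p ++ q) v ↔ ∃ m, M.Seq s p m ∧ M.Seq m q v := by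
  induction p with
  | nil =>
    intro s v
    constructor
    · intro h; exact ⟨s, Seq.nil s, h⟩
    · rintro ⟨m, hm, hq⟩; cases hm; exact hq
  | cons a p ih =>
    intro s v
    constructor
    · intro h
      cases h with
      | cons he hrest =>
        obtain ⟨m, h1, h2⟩ := ih.mp hrest
        exact ⟨m, Seq.cons he h1, h2⟩
    · rintro ⟨m, hm, hq⟩
      cases hm with
      | cons he hrest =>
        exact Seq.cons he (ih.mpr ⟨m, hrest, hq⟩)

lemma commute {M : Sys S T R} {D : R → R → Prop} (hD : M.ValidDep D) {r : R} :
    ∀ {p : List R} {s s₁ : S}, M.Seq s p s₁ → (∀ a ∈ p, ¬ D a r) →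
      M.enabled r s₁ → M.enabled r s ∧ M.Seq (M.step r s) p (M.step r s₁) := by
  intro p
  induction p with
  | nil =>
    intro s s₁ hseq _ he
    cases hseq
    exact ⟨he, Seq.nil _⟩
  | cons a p ih =>
    intro s s₁ hseq hind he
    cases hseq with
    | cons hea hrest =>
      have hDar : ¬ D a r := hind a (List.mem_cons_self : a ∈ a :: p)
      obtain ⟨he', hseq'⟩ := ih hrest (fun x hx => hind x (List.mem_cons_of_mem a hx)) he
      have hval := hD.2.2 a r hDar s hea
      have hers : M.enabled r s := hval.2.1.mpr he'
      have hcomm : M.step r (M.step a s) = M.step a (M.step r s) := hval.2.2 hers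
      have hDra : ¬ D r a := fun h => hDar (hD.2.1 r a h)
      have hval2 := hD.2.2 r a hDra s hers
      have hea' : M.enabled a (M.step r s) := hval2.2.1.mp hea
      refine ⟨hers, Seq.cons hea' ?_⟩
      rw [← hcomm]
      exact hseq'

lemma key {M : Sys S T R} {D : R → R → Prop} (hD : M.ValidDep D) {α : R} :
    ∀ (w : List R) {s sn v' : S} (u₁ : List R),
      M.Seq s w sn → M.Seq s u₁ v' → w.Nodup → u₁.Nodup →
      (∀ b ∈ w, b ∈ u₁) →
      (∀ a b, D a b → List.Sublist [a, b] u₁ → b ∈ w → List.Sublist [a, b] w) →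
      (∀ x ∈ u₁, x ∉ w → ¬ D x α) →
      ∃ e, M.Seq sn e v' ∧ ∀ x ∈ e, ¬ D x α := by
  intro w
  induction w with
  | nil =>
    intro s sn v' u₁ hw hu _ _ _ _ hnew
    cases hw
    exact ⟨u₁, hu, fun x hx => hnew x hx List.not_mem_nil⟩
  | cons r w' ih =>
    intro s sn v' u₁ hw hu hwnd hund hmem H hnew
    cases hw with
    | cons her hw' =>
      have hrw : r ∉ w' := (List.nodup_cons.mp hwnd).1
      have hru : r ∈ u₁ := hmem r (List.mem_cons_self : r ∈ r :: w')
      obtain ⟨p, q, rfl⟩ := List.append_of_mem hru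
      have hnd := List.nodup_append'.mp hund
      have hrp : r ∉ p := fun h => (hnd.2.2 h) (List.mem_cons_self : r ∈ r :: q)
      have hrq : r ∉ q := (List.nodup_cons.mp hnd.2.1).1
      -- everything in p is independent of r
      have hindep : ∀ a ∈ p, ¬ D a r := by
        intro a ha hDar
        have hsl : List.Sublist [a, r] (p ++ r :: q) :=
          List.Sublist.append (List.singleton_sublist.mpr ha)
            (List.singleton_sublist.mpr (List.mem_cons_self : r ∈ r :: q))
        have hsw := H a r hDar hsl (List.mem_cons_self : r ∈ r :: w')
        cases hsw with
        | cons _ h => exact hrw (List.singleton_sublist.mp (List.sublist_of_cons_sublist h))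
        | cons_cons _ h => exact hrw (List.singleton_sublist.mp h)
      obtain ⟨s₁, hp, hq⟩ := seq_append.mp hu
      cases hq with
      | cons hers₁ hqrest =>
        obtain ⟨_, hp'⟩ := commute hD hp hindep hers₁
        have hnew' : M.Seq (M.step r s) (p ++ q) v' :=
          seq_append.mpr ⟨M.step r s₁, hp', hqrest⟩
        -- apply IH
        have hund' : (p ++ q).Nodup :=
          hund.sublist (List.Sublist.append (List.Sublist.refl p) (List.sublist_cons_self r q))
        have hsub_pq : List.Sublist (p ++ q) (p ++ r :: q) :=
          List.Sublist.append (List.Sublist.refl p) (List.sublist_cons_self r q)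
        have hmem' : ∀ b ∈ w', b ∈ p ++ q := by
          intro b hb
          have hbu : b ∈ p ++ r :: q := hmem b (List.mem_cons_of_mem r hb)
          have hbr : b ≠ r := fun h => hrw (h ▸ hb)
          rcases List.mem_append.mp hbu with h | h
          · exact List.mem_append.mpr (Or.inl h)
          · rcases List.mem_cons.mp h with h | h
            · exact absurd h hbr
            · exact List.mem_append.mpr (Or.inr h)
        have H' : ∀ a b, D a b → List.Sublist [a, b] (p ++ q) → b ∈ w' →
            List.Sublist [a, b] w' := by
          intro a b hab hsl hbw
          have hsl' : List.Sublist [a, b] (p ++ r :: q) := hsl.trans hsub_pq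
          have hsw := H a b hab hsl' (List.mem_cons_of_mem r hbw)
          cases hsw with
          | cons _ h => exact h
          | cons_cons _ h =>
            -- a = r, but a ∈ p ++ q while r ∉ p ++ q
            have ha : r ∈ p ++ q := hsl.subset (List.mem_cons_self : r ∈ r :: [b])
            rcases List.mem_append.mp ha with h' | h'
            · exact absurd h' hrp
            · exact absurd h' hrq
        have hnewα : ∀ x ∈ p ++ q, x ∉ w' → ¬ D x α := by
          intro x hx hxw
          have hxu : x ∈ p ++ r :: q := hsub_pq.subset hx
          refine hnew x hxu ?_
          intro hxw'
          rcases List.mem_cons.mp hxw' with h | h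
          · subst h
            rcases List.mem_append.mp hx with h' | h'
            · exact hrp h'
            · exact hrq h'
          · exact hxw h
        exact ih (p ++ q) hw' hnew' (List.nodup_cons.mp hwnd).2 hund' hmem' H' hnewα

lemma viol_preserved {M : Sys S T R} {D : R → R → Prop} {α : R} {Viol : S → Prop}
    (hα : M.IsAssertion D α Viol) :
    ∀ {e : List R} {sn v' : S}, M.Seq sn e v' → (∀ x ∈ e, ¬ D x α) →
      Viol sn → Viol v' := by
  intro e
  induction e with
  | nil => intro sn v' h _ hv; cases h; exact hv
  | cons x e ih =>
    intro sn v' h hind hv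
    cases h with
    | cons he hrest =>
      exact ih hrest (fun y hy => hind y (List.mem_cons_of_mem x hy))
        ((hα.2 x sn (hind x (List.mem_cons_self : x ∈ x :: e)) he).mpr hv)

end Sys

/-- If `w` reaches a state violating a local assertion and `u`
is a dependence-covering sequence of `w` whose new transitions are all
independent of the assertion, then some prefix of `u` reaches a violating
state. -/
theorem assertion_violation_in_dependence_covering_sequence
    {S T R : Type} (M : Sys S T R) (D : R → R → Prop)
    (hD : M.ValidDep D) (hwf : M.Wf)
    {α : R} {Viol : S → Prop} (hα : M.IsAssertion D α Viol)
    {s sn sm : S} {w u : List R}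
    (hw : M.Seq s w sn) (hviol : Viol sn)
    (hu : M.DepCovering D s w sn u sm)
    (hnew : ∀ r ∈ u, r ∉ w → ¬ D r α) :
    ∃ u₁ v', u₁ <+: u ∧ M.Seq s u₁ v' ∧ Viol v' := by
  obtain ⟨hw', huSeq, hsub, hcases⟩ := hu
  have hwfw := hwf s w sn hw
  have hwfu := hwf s u sm huSeq
  have H : ∀ a b, D a b → List.Sublist [a, b] u → b ∈ w → List.Sublist [a, b] w := by
    intro a b hab hsl hbw
    rcases hcases a b hab hsl with h1 | ⟨_, h2⟩ | ⟨_, h2, _⟩ | ⟨h4, _⟩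
    · exact h1
    · exact absurd h2 (hwfw.2 b hbw)
    · exact absurd h2 (hwfw.2 b hbw)
    · exact absurd hbw h4
  obtain ⟨e, hseq_e, hind_e⟩ :=
    Sys.key hD w u hw huSeq hwfw.1 hwfu.1 hsub H hnew
  exact ⟨u, sm, List.prefix_refl u, huSeq, Sys.viol_preserved hα hseq_e hind_e hviol⟩
end

section
/- Let r and r' be transitions belonging to two distinct tasks that execute on the same thread. Suppose p_i, …, p₁ and q_i, …, q₁ are post transitions such that: p₁ posts the task of r and q₁ posts the task of r'; for each 1 ≤ j < i, p_{j+1} posts the task of p_j and q_{j+1} posts the task of q_j; for each 1 ≤ j ≤ i, dest p_j = dest q_j (at every level the two chains post to the same destination thread); for each 1 ≤ j < i the tasks of p_j and q_j are distinct; and p_i and q_i execute on different threads (they are the diverging posts of r and r'). Then in every transition sequence w in which r, r', and all of p₁, …, p_i, q₁, …, q_i occur, r occurs before r' if and only if p_i occurs before q_i: the order of execution of the diverging posts uniquely determines the order of execution of r and r'. -/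
/-- An event-driven multi-threaded program with tasks (event-handler
instances): each transition belongs to a task, all transitions of one task
execute on one thread, and each post transition designates a posted task whose
transitions all execute on the destination thread of the post. -/
structure ESys (S T R τ : Type) extends Sys S T R where
  task : R → τ
  taskThread : τ → T
  thread_eq : ∀ r, thread r = taskThread (task r)
  isPost : R → Prop
  posted : R → τ
  dest : R → T
  posted_thread : ∀ p, isPost p → taskThread (posted p) = dest p

namespace ESys

variable {S T R τ : Type}

/-- Posted tasks are handled atomically and in FIFO order: if posts `a` and `b`
to the same destination thread (posting distinct tasks) occur in a transition
sequence with `a` before `b`, then every transition of the task posted by `a`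
occurring in the sequence precedes every transition of the task posted by `b`
occurring in the sequence. -/
def FIFO (E : ESys S T R τ) : Prop :=
  ∀ s w s', E.toSys.Seq s w s' →
    ∀ a b, E.isPost a → E.isPost b → E.dest a = E.dest b →
      E.posted a ≠ E.posted b → List.Sublist [a, b] w →
      ∀ x y, E.task x = E.posted a → E.task y = E.posted b →
        x ∈ w → y ∈ w → List.Sublist [x, y] w

end ESys

lemma sublist_pair_of_mem {α : Type*} {x y : α} {w : List α} (hx : x ∈ w) (hy : y ∈ w)
    (hne : x ≠ y) : List.Sublist [x, y] w ∨ List.Sublist [y, x] w := by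
  induction w with
  | nil => simp at hx
  | cons z t ih =>
    rcases List.mem_cons.mp hx with rfl | hx'
    · left
      rcases List.mem_cons.mp hy with rfl | hy'
      · exact absurd rfl hne
      · exact (List.singleton_sublist.mpr hy').cons₂ x
    · rcases List.mem_cons.mp hy with rfl | hy'
      · right; exact (List.singleton_sublist.mpr hx').cons₂ y
      · rcases ih hx' hy' with h | h
        · left; exact h.cons z
        · right; exact h.cons z

lemma not_sublist_pair_rev {α : Type*} {x y : α} {w : List α} (hn : w.Nodup)
    (hne : x ≠ y) (h : List.Sublist [x, y] w) : ¬ List.Sublist [y, x] w := by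
  induction w with
  | nil => exact absurd h (by simp)
  | cons z t ih =>
    rw [List.nodup_cons] at hn
    intro h'
    cases h with
    | cons _ h1 =>
      cases h' with
      | cons _ h2 => exact ih hn.2 h1 h2
      | cons_cons _ h2 => exact hn.1 (h1.subset (by simp))
    | cons_cons _ h1 =>
      cases h' with
      | cons _ h2 => exact hn.1 (h2.subset (by simp))
      | cons_cons _ h2 => exact hne rfl

/-- The order of execution of the diverging posts of `r` and
`r'` uniquely determines the order of execution of `r` and `r'`. -/
theorem diverging_posts_determine_order
    {S T R τ : Type} (E : ESys S T R τ) (hfifo : E.FIFO) (hwf : E.toSys.Wf)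
    {r r' : R}
    (hth : E.toSys.thread r = E.toSys.thread r')
    (htk : E.task r ≠ E.task r')
    {i : ℕ} (hi : 0 < i) (p q : Fin i → R)
    (hpost : ∀ j, E.isPost (p j) ∧ E.isPost (q j))
    (hp0 : E.posted (p ⟨0, hi⟩) = E.task r)
    (hq0 : E.posted (q ⟨0, hi⟩) = E.task r')
    (hpchain : ∀ (j : ℕ) (h : j + 1 < i),
      E.posted (p ⟨j + 1, h⟩) = E.task (p ⟨j, by omega⟩))
    (hqchain : ∀ (j : ℕ) (h : j + 1 < i),
      E.posted (q ⟨j + 1, h⟩) = E.task (q ⟨j, by omega⟩))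
    (hdest : ∀ j, E.dest (p j) = E.dest (q j))
    (hdistinct : ∀ (j : ℕ) (h : j + 1 < i),
      E.task (p ⟨j, by omega⟩) ≠ E.task (q ⟨j, by omega⟩))
    (hdiv : E.toSys.thread (p ⟨i - 1, by omega⟩) ≠ E.toSys.thread (q ⟨i - 1, by omega⟩))
    {s s' : S} {w : List R} (hw : E.toSys.Seq s w s')
    (hrin : r ∈ w) (hr'in : r' ∈ w)
    (hall : ∀ j, p j ∈ w ∧ q j ∈ w) :
    (List.Sublist [r, r'] w ↔
      List.Sublist [p ⟨i - 1, by omega⟩, q ⟨i - 1, by omega⟩] w) := by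
  have key : ∀ (j : ℕ) (h : j < i),
      List.Sublist [p ⟨j, h⟩, q ⟨j, h⟩] w → List.Sublist [r, r'] w := by
    intro j
    induction j with
    | zero =>
      intro h hs
      exact hfifo s w s' hw _ _ (hpost _).1 (hpost _).2 (hdest _)
        (by rw [hp0, hq0]; exact htk) hs r r' hp0.symm hq0.symm hrin hr'in
    | succ j ih =>
      intro h hs
      have h' : j < i := by omega
      exact ih h' (hfifo s w s' hw _ _ (hpost _).1 (hpost _).2 (hdest _)
        (by rw [hpchain j h, hqchain j h]; exact hdistinct j h) hs _ _
        (hpchain j h).symm (hqchain j h).symm (hall _).1 (hall _).2)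
  have key' : ∀ (j : ℕ) (h : j < i),
      List.Sublist [q ⟨j, h⟩, p ⟨j, h⟩] w → List.Sublist [r', r] w := by
    intro j
    induction j with
    | zero =>
      intro h hs
      exact hfifo s w s' hw _ _ (hpost _).2 (hpost _).1 (hdest _).symm
        (by rw [hp0, hq0]; exact htk.symm) hs r' r hq0.symm hp0.symm hr'in hrin
    | succ j ih =>
      intro h hs
      have h' : j < i := by omega
      exact ih h' (hfifo s w s' hw _ _ (hpost _).2 (hpost _).1 (hdest _).symm
        (by rw [hpchain j h, hqchain j h]; exact (hdistinct j h).symm) hs _ _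
        (hqchain j h).symm (hpchain j h).symm (hall _).2 (hall _).1)
  have hnd := (hwf s w s' hw).1
  have hrne : r ≠ r' := fun e => htk (by rw [e])
  have hpqne : p ⟨i - 1, by omega⟩ ≠ q ⟨i - 1, by omega⟩ := fun e => hdiv (by rw [e])
  constructor
  · intro hrr
    rcases sublist_pair_of_mem (hall _).1 (hall _).2 hpqne with h | h
    · exact h
    · exact absurd (key' (i - 1) (by omega) h) (not_sublist_pair_rev hnd hrne hrr)
  · exact key (i - 1) (by omega)
end
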